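/- arXiv:1805.12213 — 3 statements merged into one kernel-verified Lean document; each statement's English description precedes it below -/
import Mathlib

section
/- For all N ≥ 2, all k ∈ {1,…,N−1}, all p ∈ (1/2,1) and all y ∈ {1,…,N−1}, one has π_{N,k}(ξ(y) = 1) ≤ π_{N,k}(ξ(y+1) = 1) ≤ λ·π_{N,k}(ξ(y) = 1). -/
open Filter
open scoped Classical BigOperators Topology

namespace Wasep

/-- Particle configurations on a segment of length `N`
(site `x` of the paper, `x ∈ {1,…,N}`, is index `x-1 : Fin N`). -/
abbrev Conf (N : ℕ) := Fin N → Bool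

/-- Number of particles of a configuration. -/
def numParticles {N : ℕ} (ξ : Conf N) : ℕ :=
  (Finset.univ.filter fun x => ξ x = true).card

/-- The left site of the bond `y` (the paper's site `y`, for `y ∈ {1,…,N-1}`). -/
def siteA {N : ℕ} (y : Fin (N - 1)) : Fin N := ⟨y.1, by have := y.isLt; omega⟩

/-- The right site of the bond `y` (the paper's site `y+1`, for `y ∈ {1,…,N-1}`). -/
def siteB {N : ℕ} (y : Fin (N - 1)) : Fin N := ⟨y.1 + 1, by have := y.isLt; omega⟩

/-- Jump rate of the bond `y` in configuration `ξ`: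
`q·1_{ξ(y)<ξ(y+1)} + p·1_{ξ(y)>ξ(y+1)}` with `q = 1-p`. -/
noncomputable def rate {N : ℕ} (p : ℝ) (ξ : Conf N) (y : Fin (N - 1)) : ℝ :=
  (if ξ (siteA y) = false ∧ ξ (siteB y) = true then 1 - p else 0) +
    (if ξ (siteA y) = true ∧ ξ (siteB y) = false then p else 0)

/-- The configuration `ξ^y`, with the contents of sites `y` and `y+1` swapped. -/
def swapBond {N : ℕ} (ξ : Conf N) (y : Fin (N - 1)) : Conf N :=
  ξ ∘ Equiv.swap (siteA y) (siteB y)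

/-- The ASEP generator acting on functions:
`(L f)(ξ) = Σ_{y=1}^{N-1} (q·1_{ξ(y)<ξ(y+1)} + p·1_{ξ(y)>ξ(y+1)})(f(ξ^y) − f(ξ))`. -/
noncomputable def gen (N : ℕ) (p : ℝ) (f : Conf N → ℝ) (ξ : Conf N) : ℝ :=
  ∑ y : Fin (N - 1), rate p ξ y * (f (swapBond ξ y) - f ξ)

/-- The ASEP generator, as a matrix:  `(L f)(ξ) = Σ_{ξ'} genM(ξ,ξ') f(ξ')`. -/
noncomputable def genM (N : ℕ) (p : ℝ) : Matrix (Conf N) (Conf N) ℝ := fun ξ ξ' =>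
  ∑ y : Fin (N - 1),
    rate p ξ y * ((if ξ' = swapBond ξ y then (1 : ℝ) else 0) - (if ξ' = ξ then (1 : ℝ) else 0))

/-- The semigroup `P_t = exp (t L)`; `Pt N p t ξ ξ'` is the transition
probability from `ξ` to `ξ'` in time `t`. -/
noncomputable def Pt (N : ℕ) (p t : ℝ) (ξ ξ' : Conf N) : ℝ :=
  (NormedSpace.exp (t • LinearMap.toContinuousLinearMap (Matrix.toLin' (genM N p))))
    (fun η => if η = ξ' then (1 : ℝ) else 0) ξ

/-- `λ = p / q`. -/
noncomputable def lam (p : ℝ) : ℝ := p / (1 - p)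

/-- The bias `b = p - q`. -/
def bias (p : ℝ) : ℝ := p - (1 - p)

/-- The increasing list of (1-based) particle positions `ξ_1 < ξ_2 < … < ξ_k`. -/
def particlePos {N : ℕ} (ξ : Conf N) : List ℕ :=
  ((Finset.univ.filter fun x => ξ x = true).sort (· ≤ ·)).map fun x => (x : ℕ) + 1

/-- `A(ξ) = Σ_{i=1}^k (N − k + i − ξ_i)`. -/
def Astat (N k : ℕ) {M : ℕ} (ξ : Conf M) : ℤ :=
  ∑ i ∈ Finset.range k, ((N : ℤ) - k + (i + 1) - ((particlePos ξ).getD i 0 : ℤ))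

/-- The partition function `Z_{N,k} = Σ_{ξ ∈ Ω⁰_{N,k}} λ^{−A(ξ)}`. -/
noncomputable def Zpart (N k : ℕ) (p : ℝ) : ℝ :=
  ∑ ξ ∈ Finset.univ.filter (fun ξ : Conf N => numParticles ξ = k), lam p ^ (-Astat N k ξ)

/-- The invariant measure `π_{N,k}(ξ) = λ^{−A(ξ)}/Z_{N,k}`,
extended by `0` outside of the `k`-particle sector. -/
noncomputable def statMeas (N k : ℕ) (p : ℝ) (ξ : Conf N) : ℝ :=
  if numParticles ξ = k then lam p ^ (-Astat N k ξ) / Zpart N k p else 0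

/-- Total variation distance `‖μ − ν‖_TV = sup_A (μ(A) − ν(A))` on a finite space. -/
noncomputable def tvDist {S : Type*} [Fintype S] (μ ν : S → ℝ) : ℝ :=
  ⨆ A : Finset S, (∑ x ∈ A, μ x - ∑ x ∈ A, ν x)

/-- `d^{N,k}(t) = max_{ξ ∈ Ω⁰_{N,k}} ‖P_t(ξ,·) − π_{N,k}‖_TV`. -/
noncomputable def distEq (N k : ℕ) (p t : ℝ) : ℝ :=
  ⨆ ξ : {ξ : Conf N // numParticles ξ = k},
    tvDist (fun ξ' => Pt N p t ξ.1 ξ') (statMeas N k p)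

/-- `T^{N,k}_mix(ε) = inf {t ≥ 0 : d^{N,k}(t) ≤ ε}`. -/
noncomputable def Tmix (N k : ℕ) (p ε : ℝ) : ℝ :=
  sInf {t : ℝ | 0 ≤ t ∧ distEq N k p t ≤ ε}

/-- The height function `h(ξ)(x) = Σ_{y=1}^x (2ξ(y) − 1)`, for `x ∈ {0,…,N}`. -/
def height {N : ℕ} (ξ : Conf N) (x : ℕ) : ℤ :=
  ∑ y ∈ Finset.univ.filter (fun y : Fin N => (y : ℕ) < x), (if ξ y then (1 : ℤ) else -1)

/-- Pointwise order on height functions. -/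
def heightLE {N : ℕ} (ξ ξ' : Conf N) : Prop := ∀ x ≤ N, height ξ x ≤ height ξ' x

/-- `ϱ = (√p − √q)²`. -/
noncomputable def rho (p : ℝ) : ℝ := (Real.sqrt p - Real.sqrt (1 - p)) ^ 2

/-- The spectral gap `gap_N = (√p − √q)² + 4√(pq)·sin²(π/(2N))`. -/
noncomputable def gapN (N : ℕ) (p : ℝ) : ℝ :=
  rho p + 4 * Real.sqrt (p * (1 - p)) * Real.sin (Real.pi / (2 * N)) ^ 2

/-- `a` solves the boundary value problem `√(pq)·Δa(x) = ϱ·a(x)` on `{1,…,N−1}`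
with `a(0) = 1` and `a(N) = λ^{(2k−N)/2}`, defining `a_{N,k}`. -/
def IsBVP (N k : ℕ) (p : ℝ) (a : ℕ → ℝ) : Prop :=
  a 0 = 1 ∧ a N = lam p ^ ((2 * (k : ℝ) - N) / 2) ∧
    ∀ x : ℕ, 1 ≤ x → x ≤ N - 1 →
      Real.sqrt (p * (1 - p)) * (a (x + 1) + a (x - 1) - 2 * a x) = rho p * a x

/-- `f^{(j)}_{N,k}(ζ) = Σ_{x=1}^{N-1} sin(jπx/N)·(λ^{ζ(x)/2} − a_{N,k}(x))/(λ−1)`,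
viewed as a function of the particle configuration via the height function. -/
noncomputable def eigenF (N : ℕ) (p : ℝ) (a : ℕ → ℝ) (j : ℕ) (ξ : Conf N) : ℝ :=
  ∑ x ∈ Finset.Icc 1 (N - 1),
    Real.sin ((j : ℝ) * Real.pi * x / N) *
      ((lam p ^ ((height ξ x : ℝ) / 2) - a x) / (lam p - 1))

/-- `f^{(0)}_{N,k}(ζ) = Σ_{x=1}^{N-1} (λ^{ζ(x)/2} − a_{N,k}(x))/(λ−1)`. -/
noncomputable def fZero (N : ℕ) (p : ℝ) (a : ℕ → ℝ) (ξ : Conf N) : ℝ :=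
  ∑ x ∈ Finset.Icc 1 (N - 1), (lam p ^ ((height ξ x : ℝ) / 2) - a x) / (lam p - 1)

/-- The maximal configuration `ξ^max` (particles on sites `1,…,k`);
its height function is `∧`. -/
def confMax (N k : ℕ) : Conf N := fun x => decide ((x : ℕ) < k)

/-- The minimal configuration `ξ^min` (particles on sites `N−k+1,…,N`);
its height function is `∨`. -/
def confMin (N k : ℕ) : Conf N := fun x => decide (N - k ≤ (x : ℕ))

/-- `π_{N,k}(ξ(x) = 1)` for the (0-based) site `x : Fin N`. -/
noncomputable def occProb (N k : ℕ) (p : ℝ) (x : Fin N) : ℝ :=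
  ∑ ξ ∈ Finset.univ.filter (fun ξ : Conf N => ξ x = true), statMeas N k p ξ

/-- `ℓ_N(ξ) = min {x ∈ {1,…,N} : ξ(x) = 1}`, the position of the leftmost particle. -/
noncomputable def leftPos {N : ℕ} (ξ : Conf N) : ℕ :=
  sInf {x | ∃ y : Fin N, ξ y = true ∧ x = (y : ℕ) + 1}

/-- `r_N(ξ) = max {x ∈ {1,…,N} : ξ(x) = 0}`, the position of the rightmost empty site. -/
noncomputable def rightEmpty {N : ℕ} (ξ : Conf N) : ℕ :=
  sSup {x | ∃ y : Fin N, ξ y = false ∧ x = (y : ℕ) + 1}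

/-- `Q₁(ξ)`: maximal length of a run of consecutive empty sites. -/
noncomputable def runEmpty {N : ℕ} (ξ : Conf N) : ℕ :=
  sSup {n | 1 ≤ n ∧ ∃ i, i + n ≤ N ∧
    ∀ y : Fin N, i ≤ (y : ℕ) → (y : ℕ) < i + n → ξ y = false}

/-- `Q₂(ξ)`: maximal length of a run of consecutive occupied sites. -/
noncomputable def runFull {N : ℕ} (ξ : Conf N) : ℕ :=
  sSup {n | 1 ≤ n ∧ ∃ i, i + n ≤ N ∧
    ∀ y : Fin N, i ≤ (y : ℕ) → (y : ℕ) < i + n → ξ y = true}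

/-- `Q(ξ) = max(Q₁(ξ), Q₂(ξ))`. -/
noncomputable def Qmax {N : ℕ} (ξ : Conf N) : ℕ := max (runEmpty ξ) (runFull ξ)

/-- `L_N(ζ) = max{x : ζ(x) = −x}` for a height function `ζ`. -/
noncomputable def LNh {N : ℕ} (ξ : Conf N) : ℕ :=
  sSup {x | x ≤ N ∧ height ξ x = -(x : ℤ)}

/-- `R_N(ζ) = min{x : ζ(x) = x − 2(N−k)}` for a height function `ζ`. -/
noncomputable def RNh (k : ℕ) {N : ℕ} (ξ : Conf N) : ℕ :=
  sInf {x | x ≤ N ∧ height ξ x = (x : ℤ) - 2 * ((N : ℤ) - k)}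

/-- `D_N(ζ) = max(|L_N(ζ) − (N−k)|, |R_N(ζ) − (N−k)|)`. -/
noncomputable def DNh (k : ℕ) {N : ℕ} (ξ : Conf N) : ℤ :=
  max |(LNh ξ : ℤ) - ((N : ℤ) - k)| |(RNh k ξ : ℤ) - ((N : ℤ) - k)|

/-- `H_ζ(x) = λ^{(N−k)/2}·(λ^{ζ(x)/2} − a_{N,k}(x))/(λ−1)`. -/
noncomputable def Hfun (N k : ℕ) (p : ℝ) (a : ℕ → ℝ) (ξ : Conf N) (x : ℕ) : ℝ :=
  lam p ^ (((N : ℝ) - k) / 2) * ((lam p ^ ((height ξ x : ℝ) / 2) - a x) / (lam p - 1))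

/-- Variance of `f` under the (probability vector) `μ`. -/
noncomputable def varOf {S : Type*} [Fintype S] (μ f : S → ℝ) : ℝ :=
  (∑ x, μ x * f x ^ 2) - (∑ x, μ x * f x) ^ 2

/-- Total variation distance between the pushforwards of `μ` and `ν` by `g`. -/
noncomputable def tvPush {S : Type*} [Fintype S] (μ ν : S → ℝ) (g : S → ℕ) : ℝ :=
  ⨆ A : Set ℕ,
    ((∑ x ∈ Finset.univ.filter (fun x => g x ∈ A), μ x) -
      ∑ x ∈ Finset.univ.filter (fun x => g x ∈ A), ν x)

/-- The scaling limit `ℓ_α(t)` of the (rescaled) position of the leftmost particle. -/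
noncomputable def ellAlpha (α t : ℝ) : ℝ :=
  if t ≤ α then 0
  else if (Real.sqrt α + Real.sqrt (1 - α)) ^ 2 ≤ t then 1 - α
  else (Real.sqrt t - Real.sqrt α) ^ 2

/-- The scaling limit `r_α(t)` of the (rescaled) position of the rightmost empty site. -/
noncomputable def rAlpha (α t : ℝ) : ℝ :=
  if t ≤ 1 - α then 1
  else if (Real.sqrt α + Real.sqrt (1 - α)) ^ 2 ≤ t then 1 - α
  else 1 - (Real.sqrt t - Real.sqrt (1 - α)) ^ 2

end Wasep

namespace Wasep

lemma sum_getD_int (l : List ℕ) :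
    ∑ i ∈ Finset.range l.length, ((l.getD i 0 : ℕ) : ℤ) = (List.map (Nat.cast : ℕ → ℤ) l).sum := by
  induction l with
  | nil => simp
  | cons a t ih =>
    rw [List.length_cons, Finset.sum_range_succ']
    simp only [List.getD_cons_succ, List.getD_cons_zero, List.map_cons, List.sum_cons]
    rw [ih]; ring

lemma flatMap_map_aux {N : ℕ} (l : List (Fin N)) :
    List.map (fun x => x + 1) (l.flatMap fun a => [(a : ℕ)]) =
      l.map (fun x : Fin N => (x : ℕ) + 1) := by
  induction l with
  | nil => rfl
  | cons a t ih => simp only [List.flatMap_cons, List.map_append, List.map_cons, List.map_nil, List.cons_append, List.nil_append] at ih ⊢; simp_all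

lemma particlePos_eq {N : ℕ} (ξ : Conf N) : particlePos ξ =
    ((Finset.univ.filter fun x => ξ x = true).sort (· ≤ ·)).map
      (fun x : Fin N => (x : ℕ) + 1) := by
  unfold particlePos
  simp [List.map_flatMap]
  rw [List.map_eq_flatMap]

lemma particlePos_sum {N : ℕ} (ξ : Conf N) :
    (List.map (Nat.cast : ℕ → ℤ) (particlePos ξ)).sum =
      ∑ x ∈ Finset.univ.filter (fun x : Fin N => ξ x = true), ((x : ℤ) + 1) := by
  rw [particlePos_eq, List.map_map]
  have hc : (Nat.cast : ℕ → ℤ) ∘ (fun x : Fin N => (x : ℕ) + 1) =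
      fun x : Fin N => (x : ℤ) + 1 := by
    funext x; simp
  rw [hc, List.Perm.sum_eq
    (((Finset.univ.filter (fun x : Fin N => ξ x = true)).sort_perm_toList (· ≤ ·)).map _),
    Finset.sum_map_toList]

lemma particlePos_length {N : ℕ} (ξ : Conf N) :
    (particlePos ξ).length = numParticles ξ := by
  rw [particlePos_eq, numParticles, List.length_map, Finset.length_sort]

lemma astat_eq (N k : ℕ) {M : ℕ} (ξ : Conf M) (h : numParticles ξ = k) :
    Astat N k ξ = (∑ i ∈ Finset.range k, ((N : ℤ) - k + (i + 1)))
      - ∑ x ∈ Finset.univ.filter (fun x : Fin M => ξ x = true), ((x : ℤ) + 1) := by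
  unfold Astat
  rw [Finset.sum_sub_distrib]
  congr 1
  have hlen : (particlePos ξ).length = k := by rw [particlePos_length, h]
  rw [← hlen, sum_getD_int, particlePos_sum]

/-- The swap of the contents of two sites, as an equivalence of configurations. -/
def swapConf {N : ℕ} (a b : Fin N) : Conf N ≃ Conf N where
  toFun ξ := ξ ∘ Equiv.swap a b
  invFun ξ := ξ ∘ Equiv.swap a b
  left_inv ξ := by funext x; simp [Function.comp, Equiv.swap_apply_self]
  right_inv ξ := by funext x; simp [Function.comp, Equiv.swap_apply_self]

lemma numParticles_swapConf {N : ℕ} (a b : Fin N) (ξ : Conf N) :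
    numParticles (swapConf a b ξ) = numParticles ξ := by
  unfold numParticles
  apply Finset.card_equiv (Equiv.swap a b)
  intro x
  simp [swapConf, Equiv.swap_apply_self]
  exact Finset.mem_filter.trans (by simp)

lemma sum_pos_swapConf {N : ℕ} (a b : Fin N) (ξ : Conf N)
    (ha : ξ a = true) (hb : ξ b = false) :
    ∑ x ∈ Finset.univ.filter (fun x : Fin N => swapConf a b ξ x = true), ((x : ℤ) + 1) =
      (∑ x ∈ Finset.univ.filter (fun x : Fin N => ξ x = true), ((x : ℤ) + 1))
        + ((b : ℤ) - (a : ℤ)) := by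
  have h1 : ∑ x ∈ Finset.univ.filter (fun x : Fin N => ξ x = true),
      (((Equiv.swap a b x : Fin N) : ℤ) + 1) =
      ∑ x ∈ Finset.univ.filter (fun x : Fin N => swapConf a b ξ x = true), ((x : ℤ) + 1) := by
    apply Finset.sum_equiv (Equiv.swap a b)
    · intro x; simp [swapConf, Equiv.swap_apply_self]; exact (Finset.mem_filter.trans (by simp)).symm
    · intro x _; rfl
  rw [← h1]
  have h2 : ∀ x ∈ Finset.univ.filter (fun x : Fin N => ξ x = true),
      (((Equiv.swap a b x : Fin N) : ℤ) + 1) =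
        (((x : ℤ) + 1) + (if x = a then ((b : ℤ) - (a : ℤ)) else 0)) := by
    intro x hx
    rcases eq_or_ne x a with rfl | hxa
    · rw [if_pos rfl, Equiv.swap_apply_left]; ring
    · have hxb : x ≠ b := by
        intro h; rw [Finset.mem_filter] at hx; rw [h, hb] at hx; simp at hx
      rw [if_neg hxa, Equiv.swap_apply_of_ne_of_ne hxa hxb]; ring
  rw [Finset.sum_congr rfl h2, Finset.sum_add_distrib, Finset.sum_ite_eq',
    if_pos (by simp [ha])]

lemma lam_pos {p : ℝ} (hp : p ∈ Set.Ioo (1 / 2 : ℝ) 1) : 0 < lam p := by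
  obtain ⟨h1, h2⟩ := hp
  have : (0 : ℝ) < 1 - p := by linarith
  exact div_pos (by linarith) this

lemma statMeas_nonneg (N k : ℕ) {p : ℝ} (hp : p ∈ Set.Ioo (1 / 2 : ℝ) 1) (ξ : Conf N) :
    0 ≤ statMeas N k p ξ := by
  have hl := lam_pos hp
  unfold statMeas
  split
  · apply div_nonneg (le_of_lt (zpow_pos hl _))
    exact Finset.sum_nonneg fun ξ' _ => le_of_lt (zpow_pos hl _)
  · exact le_refl 0

lemma statMeas_swapConf (N k : ℕ) {p : ℝ} (hp : p ∈ Set.Ioo (1 / 2 : ℝ) 1)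
    {a b : Fin N} (hab : (b : ℕ) = (a : ℕ) + 1) (ξ : Conf N)
    (ha : ξ a = true) (hb : ξ b = false) :
    statMeas N k p (swapConf a b ξ) = lam p * statMeas N k p ξ := by
  have hl := lam_pos hp
  unfold statMeas
  rw [numParticles_swapConf]
  by_cases h : numParticles ξ = k
  · rw [if_pos h, if_pos h]
    have hA : Astat N k (swapConf a b ξ) = Astat N k ξ - 1 := by
      rw [astat_eq N k _ (by rw [numParticles_swapConf]; exact h), astat_eq N k ξ h,
        sum_pos_swapConf a b ξ ha hb]
      have : (b : ℤ) - (a : ℤ) = 1 := by omega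
      rw [this]; ring
    rw [hA]
    have he : -(Astat N k ξ - 1) = -Astat N k ξ + 1 := by ring
    rw [he, zpow_add_one₀ (ne_of_gt hl)]
    rw [mul_comm (lam p ^ (-Astat N k ξ)) (lam p), mul_div_assoc]
  · rw [if_neg h, if_neg h, mul_zero]

/-- Monotonicity of the equilibrium occupation probabilities:
`π_{N,k}(ξ(y) = 1) ≤ π_{N,k}(ξ(y+1) = 1) ≤ λ·π_{N,k}(ξ(y) = 1)` (here `y : Fin N`
with `y+1 < N` is the 0-based index of the paper's site `y ∈ {1,…,N−1}`). -/
theorem occupation_probability_monotone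
    (N k : ℕ) (p : ℝ) (hN : 2 ≤ N) (hk : 1 ≤ k ∧ k < N)
    (hp : p ∈ Set.Ioo (1 / 2 : ℝ) 1) (y : Fin N) (hy : (y : ℕ) + 1 < N) :
    occProb N k p y ≤ occProb N k p ⟨(y : ℕ) + 1, hy⟩ ∧
      occProb N k p ⟨(y : ℕ) + 1, hy⟩ ≤ lam p * occProb N k p y := by
  set a : Fin N := y with hadef
  set b : Fin N := ⟨(y : ℕ) + 1, hy⟩ with hbdef
  have hab : (b : ℕ) = (a : ℕ) + 1 := rfl
  have hpos : ∀ ξ : Conf N, 0 ≤ statMeas N k p ξ := statMeas_nonneg N k hp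
  have hlam1 : 1 ≤ lam p := by
    obtain ⟨h1, h2⟩ := hp
    have h3 : (0 : ℝ) < 1 - p := by linarith
    rw [lam, le_div_iff₀ h3]; linarith
  set T11 : ℝ := ∑ ξ ∈ Finset.univ.filter (fun ξ : Conf N => ξ a = true ∧ ξ b = true),
    statMeas N k p ξ with hT11
  set T10 : ℝ := ∑ ξ ∈ Finset.univ.filter (fun ξ : Conf N => ξ a = true ∧ ξ b = false),
    statMeas N k p ξ with hT10
  set T01 : ℝ := ∑ ξ ∈ Finset.univ.filter (fun ξ : Conf N => ξ a = false ∧ ξ b = true),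
    statMeas N k p ξ with hT01
  have split1 : occProb N k p a = T11 + T10 := by
    rw [occProb, ← Finset.sum_filter_add_sum_filter_not
      (Finset.univ.filter fun ξ : Conf N => ξ a = true) (fun ξ => ξ b = true)]
    congr 1
    · rw [Finset.filter_filter]
    · rw [Finset.filter_filter, hT10]
      congr 1
      apply Finset.filter_congr
      intro ξ _
      simp
  have split2 : occProb N k p b = T11 + T01 := by
    rw [occProb, ← Finset.sum_filter_add_sum_filter_not
      (Finset.univ.filter fun ξ : Conf N => ξ b = true) (fun ξ => ξ a = true)]
    congr 1
    · rw [Finset.filter_filter, hT11]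
      congr 1
      apply Finset.filter_congr
      intro ξ _
      simp [and_comm]
    · rw [Finset.filter_filter, hT01]
      congr 1
      apply Finset.filter_congr
      intro ξ _
      simp [and_comm]
  have key : T01 = lam p * T10 := by
    rw [hT01, hT10, Finset.mul_sum]
    refine (Finset.sum_equiv (swapConf a b) ?_ ?_).symm
    · intro ξ
      simp only [Finset.mem_filter, Finset.mem_univ, true_and]
      constructor
      · rintro ⟨h1, h2⟩
        constructor
        · show ξ (Equiv.swap a b a) = false
          rw [Equiv.swap_apply_left, h2]
        · show ξ (Equiv.swap a b b) = true
          rw [Equiv.swap_apply_right, h1]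
      · rintro ⟨h1, h2⟩
        have e1 : ξ (Equiv.swap a b a) = false := h1
        have e2 : ξ (Equiv.swap a b b) = true := h2
        rw [Equiv.swap_apply_left] at e1
        rw [Equiv.swap_apply_right] at e2
        exact ⟨e2, e1⟩
    · intro ξ hξ
      rw [Finset.mem_filter] at hξ
      exact (statMeas_swapConf N k hp hab ξ hξ.2.1 hξ.2.2).symm
  have h10 : 0 ≤ T10 := Finset.sum_nonneg fun ξ _ => hpos ξ
  have h11 : 0 ≤ T11 := Finset.sum_nonneg fun ξ _ => hpos ξ
  have hm10 : 0 ≤ (lam p - 1) * T10 := mul_nonneg (by linarith) h10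
  have hm11 : 0 ≤ (lam p - 1) * T11 := mul_nonneg (by linarith) h11
  constructor
  · rw [split1, split2, key]; nlinarith
  · rw [split1, split2, key]; nlinarith

end Wasep
end

section
/- For all N ≥ 2, all k ∈ {1,…,N−1}, all p ∈ (1/2,1) and every j ∈ {1,…,N−1}, the function f^{(j)}_{N,k} (viewed as a function on Ω⁰_{N,k} via the height-function identification) is an eigenfunction of the ASEP generator: L_{N,k} f^{(j)}_{N,k} = −γ_j · f^{(j)}_{N,k}, where γ_j = ϱ + 4√(pq)·sin²(jπ/(2N)). -/
open Filter
open scoped Classical BigOperators Topology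

namespace Wasep

lemma filter_lt_succ (N x : ℕ) (hx : x < N) :
    (Finset.univ.filter fun y : Fin N => (y : ℕ) < x + 1) =
      insert ⟨x, hx⟩ (Finset.univ.filter fun y : Fin N => (y : ℕ) < x) := by
  ext z
  simp only [Finset.mem_filter, Finset.mem_univ, true_and, Finset.mem_insert, Fin.ext_iff]
  omega

lemma height_zero {N : ℕ} (ξ : Conf N) : height ξ 0 = 0 := by
  unfold height
  have : (Finset.univ.filter fun y : Fin N => (y : ℕ) < 0) = ∅ := by
    ext z; simp
  rw [this, Finset.sum_empty]

lemma height_succ {N : ℕ} (ξ : Conf N) (x : ℕ) (hx : x < N) :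
    height ξ (x + 1) = height ξ x + (if ξ ⟨x, hx⟩ then 1 else -1) := by
  unfold height
  rw [filter_lt_succ N x hx, Finset.sum_insert (by simp)]
  ring

lemma height_top {N : ℕ} (ξ : Conf N) :
    height ξ N = 2 * (numParticles ξ : ℤ) - N := by
  unfold height numParticles
  have h1 : (Finset.univ.filter fun y : Fin N => (y : ℕ) < N) = Finset.univ := by
    ext z; simp [z.isLt]
  rw [h1]
  have h2 : ∀ z : Fin N, (if ξ z then (1 : ℤ) else -1)
      = 2 * (if ξ z = true then (1 : ℤ) else 0) - 1 := by
    intro z; by_cases h : ξ z <;> simp [h]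
  rw [Finset.sum_congr rfl fun z _ => h2 z, Finset.sum_sub_distrib, ← Finset.mul_sum,
    Finset.sum_boole, Finset.sum_const, Finset.card_univ, Fintype.card_fin]
  simp

lemma height_swapBond {N : ℕ} (ξ : Conf N) (y : Fin (N - 1)) (x : ℕ) :
    height (swapBond ξ y) x =
      if x = (y : ℕ) + 1 then
        height ξ x + ((if ξ (siteB y) then (1 : ℤ) else -1) -
          (if ξ (siteA y) then (1 : ℤ) else -1))
      else height ξ x := by
  have hy : (y : ℕ) < N - 1 := y.isLt
  unfold height swapBond
  simp only [Function.comp]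
  by_cases hx : x = (y : ℕ) + 1
  · subst hx
    rw [if_pos rfl]
    have ha : siteA y ∈ Finset.univ.filter (fun z : Fin N => (z : ℕ) < (y : ℕ) + 1) := by
      simp [siteA]
    rw [← Finset.sum_erase_add _ _ ha, ← Finset.sum_erase_add _ _ ha]
    have hc : ∀ z ∈ (Finset.univ.filter (fun z : Fin N => (z : ℕ) < (y : ℕ) + 1)).erase (siteA y),
        (if ξ (Equiv.swap (siteA y) (siteB y) z) then (1 : ℤ) else -1)
          = (if ξ z then (1 : ℤ) else -1) := by
      intro z hz
      simp only [Finset.mem_erase, Finset.mem_filter, Finset.mem_univ, true_and] at hz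
      have hzb : z ≠ siteB y := by
        intro h
        have : (z : ℕ) = (y : ℕ) + 1 := by rw [h]; rfl
        omega
      simp only [Equiv.swap_apply_of_ne_of_ne hz.1 hzb]
    rw [Finset.sum_congr rfl hc]
    simp only [Equiv.swap_apply_left]
    ring
  · rw [if_neg hx]
    rcases lt_or_ge x ((y : ℕ) + 1) with h | h
    · apply Finset.sum_congr rfl
      intro z hz
      simp only [Finset.mem_filter, Finset.mem_univ, true_and] at hz
      have hza : z ≠ siteA y := by
        intro hzz
        have : (z : ℕ) = (y : ℕ) := by rw [hzz]; rfl
        omega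
      have hzb : z ≠ siteB y := by
        intro hzz
        have : (z : ℕ) = (y : ℕ) + 1 := by rw [hzz]; rfl
        omega
      simp only [Equiv.swap_apply_of_ne_of_ne hza hzb]
    · have h2 : (y : ℕ) + 2 ≤ x := by omega
      refine Finset.sum_equiv (Equiv.swap (siteA y) (siteB y)) ?_ ?_
      · intro z
        simp only [Finset.mem_filter, Finset.mem_univ, true_and]
        by_cases hza : z = siteA y
        · subst hza
          rw [Equiv.swap_apply_left]
          simp only [siteA, siteB]
          omega
        · by_cases hzb : z = siteB y
          · subst hzb
            rw [Equiv.swap_apply_right]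
            simp only [siteA, siteB]
            omega
          · rw [Equiv.swap_apply_of_ne_of_ne hza hzb]
      · intro z _
        rfl
/-- `S N j x = sin (jπx/N)`. -/
noncomputable def S (N j x : ℕ) : ℝ := Real.sin ((j : ℝ) * Real.pi * x / N)

/-- `U x = λ^{ζ(x)/2}`. -/
noncomputable def U (N : ℕ) (p : ℝ) (ξ : Conf N) (x : ℕ) : ℝ :=
  lam p ^ ((height ξ x : ℝ) / 2)

/-- `V x = λ^{ζ(x)/2} - a x`. -/
noncomputable def V (N : ℕ) (p : ℝ) (a : ℕ → ℝ) (ξ : Conf N) (x : ℕ) : ℝ :=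
  U N p ξ x - a x

lemma eigenF_eq (N : ℕ) (p : ℝ) (a : ℕ → ℝ) (j : ℕ) (ζ : Conf N) :
    eigenF N p a j ζ =
      ∑ i ∈ Finset.range (N - 1), S N j (i + 1) * (V N p a ζ (i + 1) / (lam p - 1)) := by
  unfold eigenF
  rw [← Finset.Ico_add_one_right_eq_Icc, Finset.sum_Ico_eq_sum_range]
  simp only [Nat.add_sub_cancel]
  refine Finset.sum_congr rfl fun i _ => ?_
  simp only [S, U, V]
  rw [add_comm 1 i]

lemma trigS (N j i : ℕ) :
    S N j (i + 2) + S N j i - 2 * S N j (i + 1) =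
      -(4 * Real.sin ((j : ℝ) * Real.pi / (2 * N)) ^ 2) * S N j (i + 1) := by
  have h := Real.sin_sq_eq_half_sub ((j : ℝ) * Real.pi / (2 * (N : ℝ)))
  rw [show 2 * ((j : ℝ) * Real.pi / (2 * (N : ℝ))) = (j : ℝ) * Real.pi / (N : ℝ) by ring] at h
  simp only [S]
  push_cast
  rw [show (j : ℝ) * Real.pi * ((i : ℝ) + 2) / N
        = (j : ℝ) * Real.pi * ((i : ℝ) + 1) / N + (j : ℝ) * Real.pi / N by ring,
      show (j : ℝ) * Real.pi * (i : ℝ) / N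
        = (j : ℝ) * Real.pi * ((i : ℝ) + 1) / N - (j : ℝ) * Real.pi / N by ring,
      Real.sin_add, Real.sin_sub, h]
  ring

lemma eigenF_swap_diff (N : ℕ) (p : ℝ) (a : ℕ → ℝ) (j : ℕ) (ξ : Conf N) (y : Fin (N - 1)) :
    eigenF N p a j (swapBond ξ y) - eigenF N p a j ξ =
      S N j ((y : ℕ) + 1) *
        ((lam p ^ (((height ξ ((y : ℕ) + 1) +
            ((if ξ (siteB y) then (1 : ℤ) else -1) - (if ξ (siteA y) then 1 else -1)) : ℤ) : ℝ) / 2)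
          - U N p ξ ((y : ℕ) + 1)) / (lam p - 1)) := by
  rw [eigenF_eq, eigenF_eq, ← Finset.sum_sub_distrib]
  rw [Finset.sum_eq_single_of_mem (y : ℕ) (Finset.mem_range.2 y.isLt)]
  · simp only [V, U]
    rw [height_swapBond, if_pos rfl]
    ring
  · intro i _ hne
    simp only [V, U]
    rw [height_swapBond, if_neg (by omega)]
    ring
lemma key_bond (N : ℕ) (p : ℝ) (hp1 : 1 / 2 < p) (hp2 : p < 1)
    (a : ℕ → ℝ) (j : ℕ) (ξ : Conf N) (y : Fin (N - 1)) :
    rate p ξ y * (eigenF N p a j (swapBond ξ y) - eigenF N p a j ξ) =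
      S N j ((y : ℕ) + 1) *
        ((Real.sqrt (p * (1 - p)) *
            (U N p ξ ((y : ℕ) + 2) + U N p ξ (y : ℕ) - 2 * U N p ξ ((y : ℕ) + 1))
          - rho p * U N p ξ ((y : ℕ) + 1)) / (lam p - 1)) := by
  have hq0 : (0 : ℝ) < 1 - p := by linarith
  have hp0 : (0 : ℝ) < p := by linarith
  have hl0 : 0 < lam p := div_pos hp0 hq0
  set sp := Real.sqrt (p * (1 - p)) with hsp
  set r := Real.sqrt (lam p) with hrd
  have hr0 : 0 < r := Real.sqrt_pos.2 hl0
  have hr2 : r * r = lam p := Real.mul_self_sqrt hl0.le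
  have hlam : lam p * (1 - p) = p := by unfold lam; field_simp
  have hr2' : r * r * (1 - p) = p := by rw [hr2]; exact hlam
  have hpr : sp * r = p := by
    rw [hsp, hrd, ← Real.sqrt_mul (by positivity)]
    rw [show p * (1 - p) * lam p = p * (lam p * (1 - p)) by ring, hlam]
    exact Real.sqrt_mul_self hp0.le
  have hq2 : sp = (1 - p) * r := by
    have h1 : ((1 - p) * r) * r = sp * r := by rw [hpr]; linarith [hr2']
    exact (mul_right_cancel₀ (ne_of_gt hr0) h1).symm
  have hrho : rho p = 1 - 2 * sp := by
    unfold rho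
    rw [hsp, Real.sqrt_mul hp0.le]
    nlinarith [Real.sq_sqrt hp0.le, Real.sq_sqrt hq0.le]
  have hstep : ∀ z : ℤ, lam p ^ (((z + 1 : ℤ) : ℝ) / 2) = lam p ^ ((z : ℝ) / 2) * r := by
    intro z
    rw [hrd, Real.sqrt_eq_rpow, ← Real.rpow_add hl0]
    congr 1
    push_cast
    ring
  have hlt1 : (y : ℕ) < N := by have := y.isLt; omega
  have hlt2 : (y : ℕ) + 1 < N := by have := y.isLt; omega
  have hmA := height_succ ξ (y : ℕ) hlt1
  have hmB := height_succ ξ ((y : ℕ) + 1) hlt2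
  have eA : (⟨(y : ℕ), hlt1⟩ : Fin N) = siteA y := rfl
  have eB : (⟨(y : ℕ) + 1, hlt2⟩ : Fin N) = siteB y := rfl
  rw [eA] at hmA
  rw [eB] at hmB
  rw [eigenF_swap_diff]
  cases hA : ξ (siteA y) <;> cases hB : ξ (siteB y) <;>
    rw [hA] at hmA <;> rw [hB] at hmB <;>
    simp only [if_true, if_false, Bool.false_eq_true, ite_false, ite_true] at hmA hmB ⊢
  · -- (false, false) : rate = 0, heights y ↦ h+1, y+2 ↦ h-1
    have hrate : rate p ξ y = 0 := by simp [rate, hA, hB]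
    rw [hrate]
    have h0 : height ξ (y : ℕ) = height ξ ((y : ℕ) + 1) + 1 := by omega
    have h2 : height ξ ((y : ℕ) + 1 + 1) = height ξ ((y : ℕ) + 1) - 1 := by omega
    have hA0 : U N p ξ (y : ℕ) = U N p ξ ((y : ℕ) + 1) * r := by
      simp only [U, h0]; exact hstep _
    have hA2 : U N p ξ ((y : ℕ) + 2) * r = U N p ξ ((y : ℕ) + 1) := by
      have h3 := hstep (height ξ ((y : ℕ) + 1) - 1)
      rw [show (height ξ ((y : ℕ) + 1) - 1 + 1 : ℤ) = height ξ ((y : ℕ) + 1) by ring] at h3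
      simp only [U, show (y : ℕ) + 2 = (y : ℕ) + 1 + 1 from rfl, h2]
      exact h3.symm
    have hspA0 : sp * U N p ξ (y : ℕ) = p * U N p ξ ((y : ℕ) + 1) := by
      rw [hA0]; linear_combination U N p ξ ((y : ℕ) + 1) * hpr
    have hspA2 : sp * U N p ξ ((y : ℕ) + 2) = (1 - p) * U N p ξ ((y : ℕ) + 1) := by
      linear_combination (1 - p) * hA2 + U N p ξ ((y : ℕ) + 2) * hq2
    rw [hrho]
    linear_combination
      (-(S N j ((y : ℕ) + 1)) / (lam p - 1)) * (hspA2 + hspA0)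
  · -- (false, true) : rate = 1-p, heights y ↦ h+1, y+2 ↦ h+1, jump exponent h+2
    have hrate : rate p ξ y = 1 - p := by simp [rate, hA, hB]
    rw [hrate]
    have h0 : height ξ (y : ℕ) = height ξ ((y : ℕ) + 1) + 1 := by omega
    have h2 : height ξ ((y : ℕ) + 1 + 1) = height ξ ((y : ℕ) + 1) + 1 := by omega
    have hA0 : U N p ξ (y : ℕ) = U N p ξ ((y : ℕ) + 1) * r := by
      simp only [U, h0]; exact hstep _
    have hA2 : U N p ξ ((y : ℕ) + 2) = U N p ξ ((y : ℕ) + 1) * r := by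
      simp only [U, show (y : ℕ) + 2 = (y : ℕ) + 1 + 1 from rfl, h2]; exact hstep _
    have hBp : lam p ^ (((height ξ ((y : ℕ) + 1) + (1 - -1) : ℤ) : ℝ) / 2)
        = U N p ξ ((y : ℕ) + 1) * r * r := by
      have h3 := hstep (height ξ ((y : ℕ) + 1) + 1)
      rw [show (height ξ ((y : ℕ) + 1) + 1 + 1 : ℤ) = height ξ ((y : ℕ) + 1) + (1 - -1) by ring]
        at h3
      rw [h3]
      have h4 := hstep (height ξ ((y : ℕ) + 1))
      simp only [U]
      rw [h4]
    have hspA0 : sp * U N p ξ (y : ℕ) = p * U N p ξ ((y : ℕ) + 1) := by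
      rw [hA0]; linear_combination U N p ξ ((y : ℕ) + 1) * hpr
    have hspA2 : sp * U N p ξ ((y : ℕ) + 2) = p * U N p ξ ((y : ℕ) + 1) := by
      rw [hA2]; linear_combination U N p ξ ((y : ℕ) + 1) * hpr
    have hqB : (1 - p) * lam p ^ (((height ξ ((y : ℕ) + 1) + (1 - -1) : ℤ) : ℝ) / 2)
        = p * U N p ξ ((y : ℕ) + 1) := by
      rw [hBp]; linear_combination U N p ξ ((y : ℕ) + 1) * hr2'
    rw [hrho]
    linear_combination (S N j ((y : ℕ) + 1) / (lam p - 1)) * (hqB - hspA2 - hspA0)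
  · -- (true, false) : rate = p, heights y ↦ h-1, y+2 ↦ h-1, jump exponent h-2
    have hrate : rate p ξ y = p := by simp [rate, hA, hB]
    rw [hrate]
    have h0 : height ξ (y : ℕ) = height ξ ((y : ℕ) + 1) - 1 := by omega
    have h2 : height ξ ((y : ℕ) + 1 + 1) = height ξ ((y : ℕ) + 1) - 1 := by omega
    have hA0 : U N p ξ (y : ℕ) * r = U N p ξ ((y : ℕ) + 1) := by
      have h3 := hstep (height ξ ((y : ℕ) + 1) - 1)
      rw [show (height ξ ((y : ℕ) + 1) - 1 + 1 : ℤ) = height ξ ((y : ℕ) + 1) by ring] at h3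
      simp only [U, h0]
      exact h3.symm
    have hA2 : U N p ξ ((y : ℕ) + 2) * r = U N p ξ ((y : ℕ) + 1) := by
      have h3 := hstep (height ξ ((y : ℕ) + 1) - 1)
      rw [show (height ξ ((y : ℕ) + 1) - 1 + 1 : ℤ) = height ξ ((y : ℕ) + 1) by ring] at h3
      simp only [U, show (y : ℕ) + 2 = (y : ℕ) + 1 + 1 from rfl, h2]
      exact h3.symm
    have hBv : lam p ^ (((height ξ ((y : ℕ) + 1) + (-1 - 1) : ℤ) : ℝ) / 2) * (r * r)
        = U N p ξ ((y : ℕ) + 1) := by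
      have h3 := hstep (height ξ ((y : ℕ) + 1) - 2)
      rw [show (height ξ ((y : ℕ) + 1) - 2 + 1 : ℤ) = height ξ ((y : ℕ) + 1) - 1 by ring] at h3
      have h4 := hstep (height ξ ((y : ℕ) + 1) - 1)
      rw [show (height ξ ((y : ℕ) + 1) - 1 + 1 : ℤ) = height ξ ((y : ℕ) + 1) by ring] at h4
      rw [show (height ξ ((y : ℕ) + 1) + (-1 - 1) : ℤ) = height ξ ((y : ℕ) + 1) - 2 by ring]
      simp only [U]
      rw [← mul_assoc, ← h3, ← h4]
    have hspA0 : sp * U N p ξ (y : ℕ) = (1 - p) * U N p ξ ((y : ℕ) + 1) := by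
      linear_combination (1 - p) * hA0 + U N p ξ (y : ℕ) * hq2
    have hspA2 : sp * U N p ξ ((y : ℕ) + 2) = (1 - p) * U N p ξ ((y : ℕ) + 1) := by
      linear_combination (1 - p) * hA2 + U N p ξ ((y : ℕ) + 2) * hq2
    have hpB : p * lam p ^ (((height ξ ((y : ℕ) + 1) + (-1 - 1) : ℤ) : ℝ) / 2)
        = (1 - p) * U N p ξ ((y : ℕ) + 1) := by
      linear_combination (1 - p) * hBv
        - lam p ^ (((height ξ ((y : ℕ) + 1) + (-1 - 1) : ℤ) : ℝ) / 2) * hr2'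
    rw [hrho]
    linear_combination (S N j ((y : ℕ) + 1) / (lam p - 1)) * (hpB - hspA0 - hspA2)
  · -- (true, true) : rate = 0, heights y ↦ h-1, y+2 ↦ h+1
    have hrate : rate p ξ y = 0 := by simp [rate, hA, hB]
    rw [hrate]
    have h0 : height ξ (y : ℕ) = height ξ ((y : ℕ) + 1) - 1 := by omega
    have h2 : height ξ ((y : ℕ) + 1 + 1) = height ξ ((y : ℕ) + 1) + 1 := by omega
    have hA0 : U N p ξ (y : ℕ) * r = U N p ξ ((y : ℕ) + 1) := by
      have h3 := hstep (height ξ ((y : ℕ) + 1) - 1)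
      rw [show (height ξ ((y : ℕ) + 1) - 1 + 1 : ℤ) = height ξ ((y : ℕ) + 1) by ring] at h3
      simp only [U, h0]
      exact h3.symm
    have hA2 : U N p ξ ((y : ℕ) + 2) = U N p ξ ((y : ℕ) + 1) * r := by
      simp only [U, show (y : ℕ) + 2 = (y : ℕ) + 1 + 1 from rfl, h2]; exact hstep _
    have hspA0 : sp * U N p ξ (y : ℕ) = (1 - p) * U N p ξ ((y : ℕ) + 1) := by
      linear_combination (1 - p) * hA0 + U N p ξ (y : ℕ) * hq2
    have hspA2 : sp * U N p ξ ((y : ℕ) + 2) = p * U N p ξ ((y : ℕ) + 1) := by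
      rw [hA2]; linear_combination U N p ξ ((y : ℕ) + 1) * hpr
    rw [hrho]
    linear_combination (-(S N j ((y : ℕ) + 1)) / (lam p - 1)) * (hspA2 + hspA0)

/-- The functions `f^{(j)}_{N,k}`, `j ∈ {1,…,N−1}`, are eigenfunctions of the ASEP
generator: `L_{N,k} f^{(j)}_{N,k} = −γ_j·f^{(j)}_{N,k}` with
`γ_j = ϱ + 4√(pq)·sin²(jπ/(2N))`. -/
theorem eigenfunction_equation
    (N k : ℕ) (p : ℝ) (hN : 2 ≤ N) (hk : 1 ≤ k ∧ k < N)
    (hp : p ∈ Set.Ioo (1 / 2 : ℝ) 1)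
    (a : ℕ → ℝ) (ha : IsBVP N k p a)
    (j : ℕ) (hj : 1 ≤ j ∧ j ≤ N - 1)
    (ξ : Conf N) (hξ : numParticles ξ = k) :
    gen N p (eigenF N p a j) ξ =
      -(rho p + 4 * Real.sqrt (p * (1 - p)) * Real.sin ((j : ℝ) * Real.pi / (2 * N)) ^ 2) *
        eigenF N p a j ξ := by
  obtain ⟨hp1, hp2⟩ := hp
  have hq0 : (0 : ℝ) < 1 - p := by linarith
  have hp0 : (0 : ℝ) < p := by linarith
  have hl0 : 0 < lam p := div_pos hp0 hq0
  set sp := Real.sqrt (p * (1 - p)) with hsp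
  -- Step 1: the generator as a sum over sites
  have hgen : gen N p (eigenF N p a j) ξ =
      ∑ i ∈ Finset.range (N - 1), S N j (i + 1) *
        ((sp * (U N p ξ (i + 2) + U N p ξ i - 2 * U N p ξ (i + 1))
          - rho p * U N p ξ (i + 1)) / (lam p - 1)) := by
    rw [← Fin.sum_univ_eq_sum_range (fun i => S N j (i + 1) *
        ((sp * (U N p ξ (i + 2) + U N p ξ i - 2 * U N p ξ (i + 1))
          - rho p * U N p ξ (i + 1)) / (lam p - 1))) (N - 1)]
    unfold gen
    exact Finset.sum_congr rfl fun y _ => key_bond N p hp1 hp2 a j ξ y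
  -- Step 2: replace U by V using the boundary value problem for a
  have hbvpi : ∀ i ∈ Finset.range (N - 1),
      S N j (i + 1) * ((sp * (U N p ξ (i + 2) + U N p ξ i - 2 * U N p ξ (i + 1))
          - rho p * U N p ξ (i + 1)) / (lam p - 1)) =
      S N j (i + 1) * ((sp * (V N p a ξ (i + 2) + V N p a ξ i - 2 * V N p a ξ (i + 1))
          - rho p * V N p a ξ (i + 1)) / (lam p - 1)) := by
    intro i hi
    rw [Finset.mem_range] at hi
    have hb := ha.2.2 (i + 1) (by omega) (by omega)
    rw [Nat.add_sub_cancel] at hb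
    simp only [show i + 1 + 1 = i + 2 from rfl] at hb
    simp only [V]
    linear_combination (S N j (i + 1) / (lam p - 1)) * hb
  -- Step 3: Abel summation (telescoping)
  have habel : ∑ i ∈ Finset.range (N - 1),
      (S N j (i + 1) * (V N p a ξ (i + 2) + V N p a ξ i - 2 * V N p a ξ (i + 1))
        - V N p a ξ (i + 1) * (S N j (i + 2) + S N j i - 2 * S N j (i + 1))) = 0 := by
    have hT := Finset.sum_range_sub
      (fun m => S N j m * V N p a ξ (m + 1) - S N j (m + 1) * V N p a ξ m) (N - 1)
    have hstep : ∀ i ∈ Finset.range (N - 1),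
        (S N j (i + 1) * (V N p a ξ (i + 2) + V N p a ξ i - 2 * V N p a ξ (i + 1))
          - V N p a ξ (i + 1) * (S N j (i + 2) + S N j i - 2 * S N j (i + 1))) =
        ((fun m => S N j m * V N p a ξ (m + 1) - S N j (m + 1) * V N p a ξ m) (i + 1)
          - (fun m => S N j m * V N p a ξ (m + 1) - S N j (m + 1) * V N p a ξ m) i) := by
      intro i _
      simp only [show i + 1 + 1 = i + 2 from rfl]
      ring
    rw [Finset.sum_congr rfl hstep, hT]
    simp only [show N - 1 + 1 = N from by omega]
    have hS0 : S N j 0 = 0 := by simp [S]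
    have hV0 : V N p a ξ 0 = 0 := by
      simp only [V, U, height_zero, Int.cast_zero, zero_div, Real.rpow_zero]
      rw [ha.1]
      ring
    have hSN : S N j N = 0 := by
      have hNne : (N : ℝ) ≠ 0 := by positivity
      simp only [S]
      rw [show (j : ℝ) * Real.pi * N / N = (j : ℝ) * Real.pi by field_simp]
      exact Real.sin_nat_mul_pi j
    have hVN : V N p a ξ N = 0 := by
      simp only [V, U, height_top, hξ]
      rw [ha.2.1]
      rw [show (((2 * (k : ℤ) - N : ℤ)) : ℝ) / 2 = (2 * (k : ℝ) - N) / 2 by push_cast; ring]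
      ring
    rw [hS0, hV0, hSN, hVN]
    ring
  -- Step 4: the discrete Laplacian of the sine
  have hSD : ∑ i ∈ Finset.range (N - 1),
      S N j (i + 1) * (V N p a ξ (i + 2) + V N p a ξ i - 2 * V N p a ξ (i + 1)) =
      -(4 * Real.sin ((j : ℝ) * Real.pi / (2 * N)) ^ 2) *
        ∑ i ∈ Finset.range (N - 1), S N j (i + 1) * V N p a ξ (i + 1) := by
    have h2 : ∑ i ∈ Finset.range (N - 1),
        S N j (i + 1) * (V N p a ξ (i + 2) + V N p a ξ i - 2 * V N p a ξ (i + 1)) =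
        ∑ i ∈ Finset.range (N - 1),
          V N p a ξ (i + 1) * (S N j (i + 2) + S N j i - 2 * S N j (i + 1)) := by
      have := habel
      rwa [Finset.sum_sub_distrib, sub_eq_zero] at this
    rw [h2, Finset.mul_sum]
    refine Finset.sum_congr rfl fun i _ => ?_
    rw [trigS]
    ring
  -- Step 5: eigenF as a sum
  have hf : eigenF N p a j ξ =
      (∑ i ∈ Finset.range (N - 1), S N j (i + 1) * V N p a ξ (i + 1)) / (lam p - 1) := by
    rw [eigenF_eq, Finset.sum_div]
    exact Finset.sum_congr rfl fun i _ => (mul_div_assoc _ _ _).symm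
  -- Conclusion
  have hsplit : ∀ i ∈ Finset.range (N - 1),
      S N j (i + 1) * ((sp * (V N p a ξ (i + 2) + V N p a ξ i - 2 * V N p a ξ (i + 1))
          - rho p * V N p a ξ (i + 1)) / (lam p - 1)) =
      (sp * (S N j (i + 1) * (V N p a ξ (i + 2) + V N p a ξ i - 2 * V N p a ξ (i + 1)))
        - rho p * (S N j (i + 1) * V N p a ξ (i + 1))) / (lam p - 1) :=
    fun i _ => by ring
  rw [hgen, Finset.sum_congr rfl hbvpi, Finset.sum_congr rfl hsplit, ← Finset.sum_div,
    Finset.sum_sub_distrib, ← Finset.mul_sum, ← Finset.mul_sum, hSD, hf]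
  ring
end Wasep
end

section
/- For all N ≥ 2, all k ∈ {1,…,N−1} and all p ∈ (1/2,1), the eigenfunction f_{N,k} = f^{(1)}_{N,k} is strictly increasing on Ω_{N,k} with quantitative minimal increment: for all ζ, ζ' ∈ Ω_{N,k} with ζ < ζ', one has f_{N,k}(ζ') − f_{N,k}(ζ) ≥ λ^{(k−N)/2}·sin(π/N). -/
open Filter
open scoped Classical BigOperators Topology

namespace Wasep

lemma filter_lt_card {N x : ℕ} (h : x ≤ N) :
    (Finset.univ.filter fun y : Fin N => (y : ℕ) < x).card = x := by
  have heq : (Finset.univ.filter fun y : Fin N => (y : ℕ) < x)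
      = Finset.map (Fin.castLEEmb h) Finset.univ := by
    ext y
    simp only [Finset.mem_filter, Finset.mem_univ, true_and, Finset.mem_map,
      Fin.castLEEmb, Function.Embedding.coeFn_mk]
    constructor
    · intro hy; exact ⟨⟨y.1, hy⟩, rfl⟩
    · rintro ⟨z, rfl⟩; exact z.isLt
  rw [heq, Finset.card_map, Finset.card_univ, Fintype.card_fin]

lemma height_step {N : ℕ} (ξ : Conf N) (y : Fin N) :
    height ξ ((y : ℕ) + 1) = height ξ (y : ℕ) + (if ξ y then 1 else -1) := by
  have hins : (Finset.univ.filter fun z : Fin N => (z : ℕ) < (y : ℕ) + 1)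
      = insert y (Finset.univ.filter fun z : Fin N => (z : ℕ) < (y : ℕ)) := by
    ext z
    simp only [Finset.mem_filter, Finset.mem_univ, true_and, Finset.mem_insert, Fin.ext_iff]
    omega
  rw [height, height, hins, Finset.sum_insert (by simp)]
  ring

lemma height_N_eq {N k : ℕ} (ξ : Conf N) (hξ : numParticles ξ = k) :
    height ξ N = 2 * (k : ℤ) - N := by
  have huniv : (Finset.univ.filter fun y : Fin N => (y : ℕ) < N) = Finset.univ := by
    ext y; simp [y.isLt]
  have hterm : ∀ y ∈ (Finset.univ : Finset (Fin N)),
      (if ξ y then (1 : ℤ) else -1) = 2 * (if ξ y = true then (1 : ℤ) else 0) - 1 := by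
    intro y _; by_cases h : ξ y <;> simp [h]
  rw [height, huniv, Finset.sum_congr rfl hterm, Finset.sum_sub_distrib, ← Finset.mul_sum,
    Finset.sum_boole, Finset.sum_const, ← hξ]
  simp [numParticles]

lemma neg_le_height {N : ℕ} (ξ : Conf N) {x : ℕ} (h : x ≤ N) :
    -(x : ℤ) ≤ height ξ x := by
  rw [height]
  calc -(x : ℤ) = ∑ _y ∈ (Finset.univ.filter fun y : Fin N => (y : ℕ) < x), (-1 : ℤ) := by
        rw [Finset.sum_const, filter_lt_card h]; simp
    _ ≤ _ := Finset.sum_le_sum (fun y _ => by split <;> norm_num)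

lemma height_ge_of_particles {N k : ℕ} (ξ : Conf N) (hξ : numParticles ξ = k)
    {x : ℕ} (h : x ≤ N) :
    2 * (k : ℤ) - 2 * N + x ≤ height ξ x := by
  classical
  have hsplit := Finset.sum_filter_add_sum_filter_not (Finset.univ : Finset (Fin N))
    (fun y : Fin N => (y : ℕ) < x) (fun y => if ξ y then (1 : ℤ) else -1)
  have huniv : ∑ y : Fin N, (if ξ y then (1 : ℤ) else -1) = height ξ N := by
    rw [height]; congr 1; ext y; simp [y.isLt]
  have hcards := Finset.card_filter_add_card_filter_not
    (s := (Finset.univ : Finset (Fin N))) (p := fun y : Fin N => (y : ℕ) < x)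
  rw [filter_lt_card h, Finset.card_univ, Fintype.card_fin] at hcards
  have hcard : (Finset.univ.filter fun y : Fin N => ¬ (y : ℕ) < x).card = N - x := by omega
  have hbound : (∑ y ∈ (Finset.univ.filter fun y : Fin N => ¬ (y : ℕ) < x),
        (if ξ y then (1 : ℤ) else -1)) ≤ (N : ℤ) - x := by
    calc (∑ y ∈ (Finset.univ.filter fun y : Fin N => ¬ (y : ℕ) < x),
          (if ξ y then (1 : ℤ) else -1))
        ≤ ∑ _y ∈ (Finset.univ.filter fun y : Fin N => ¬ (y : ℕ) < x), (1 : ℤ) :=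
          Finset.sum_le_sum (fun y _ => by split <;> norm_num)
      _ = (N : ℤ) - x := by
          rw [Finset.sum_const, hcard]
          have : ((N - x : ℕ) : ℤ) = (N : ℤ) - x := by omega
          simp [this]
  have hx : height ξ x = height ξ N -
      ∑ y ∈ (Finset.univ.filter fun y : Fin N => ¬ (y : ℕ) < x),
        (if ξ y then (1 : ℤ) else -1) := by
    rw [height, ← huniv, ← hsplit]; ring
  rw [hx, height_N_eq ξ hξ]
  linarith

lemma height_add_even {N : ℕ} (ξ : Conf N) {x : ℕ} (h : x ≤ N) :
    (2 : ℤ) ∣ height ξ x + x := by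
  have heq : height ξ x + x = ∑ y ∈ (Finset.univ.filter fun y : Fin N => (y : ℕ) < x),
      ((if ξ y then (1 : ℤ) else -1) + 1) := by
    rw [Finset.sum_add_distrib, Finset.sum_const, filter_lt_card h, height]
    simp
  rw [heq]
  apply Finset.dvd_sum
  intro y _
  split <;> norm_num

lemma eq_of_height_eq {N : ℕ} (ξ ξ' : Conf N)
    (h : ∀ x ≤ N, height ξ x = height ξ' x) : ξ = ξ' := by
  funext y
  have h1 := h (y : ℕ) y.isLt.le
  have h2 := h ((y : ℕ) + 1) y.isLt
  rw [height_step, height_step, h1] at h2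
  cases hb : ξ y <;> cases hb' : ξ' y <;> simp [hb, hb'] at h2 ⊢ <;> omega

lemma sin_le_sin_aux {N x : ℕ} (hN : 2 ≤ N) (h1 : 1 ≤ x) (h2 : 2 * x ≤ N) :
    Real.sin (Real.pi / N) ≤ Real.sin (Real.pi * x / N) := by
  have hN0 : (0 : ℝ) < N := by positivity
  have hpi := Real.pi_pos
  have hx1 : (1 : ℝ) ≤ x := by exact_mod_cast h1
  have hx2 : 2 * (x : ℝ) ≤ N := by exact_mod_cast h2
  have hN2 : (2 : ℝ) ≤ N := by exact_mod_cast hN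
  apply Real.strictMonoOn_sin.monotoneOn
  · constructor
    · have : (0 : ℝ) ≤ Real.pi / N := by positivity
      linarith [Real.pi_pos]
    · rw [div_le_div_iff₀ hN0 (by norm_num : (0:ℝ) < 2)]
      nlinarith
  · constructor
    · have : (0 : ℝ) ≤ Real.pi * x / N := by positivity
      linarith [Real.pi_pos]
    · rw [div_le_div_iff₀ hN0 (by norm_num : (0:ℝ) < 2)]
      nlinarith
  · rw [div_le_div_iff₀ hN0 hN0]
    nlinarith [mul_le_mul_of_nonneg_left hx1 (mul_pos hpi hN0).le]

lemma sin_pi_div_le {N x : ℕ} (hN : 2 ≤ N) (h1 : 1 ≤ x) (h2 : x ≤ N - 1) :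
    Real.sin (Real.pi / N) ≤ Real.sin (Real.pi * x / N) := by
  have hN0 : (0 : ℝ) < N := by positivity
  rcases le_or_gt (2 * x) N with h | h
  · exact sin_le_sin_aux hN h1 h
  · have h1' : 1 ≤ N - x := by omega
    have h2' : 2 * (N - x) ≤ N := by omega
    have key := sin_le_sin_aux hN h1' h2'
    have hx : x ≤ N := by omega
    have heq : Real.pi * ((N - x : ℕ) : ℝ) / N = Real.pi - Real.pi * x / N := by
      have hc : ((N - x : ℕ) : ℝ) = (N : ℝ) - x := by
        have : ((N - x : ℕ) : ℤ) = (N : ℤ) - x := by omega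
        exact_mod_cast congrArg (Int.cast : ℤ → ℝ) this
      rw [hc]
      field_simp
    rw [heq, Real.sin_pi_sub] at key
    exact key

/-- The eigenfunction `f_{N,k} = f^{(1)}_{N,k}` is strictly increasing, with minimal
increment at least `λ^{(k−N)/2}·sin(π/N)` over strictly ordered pairs. -/
theorem eigenfunction_minimal_increment
    (N k : ℕ) (p : ℝ) (hN : 2 ≤ N) (hk : 1 ≤ k ∧ k < N)
    (hp : p ∈ Set.Ioo (1 / 2 : ℝ) 1)
    (a : ℕ → ℝ) (ha : IsBVP N k p a)
    (ξ ξ' : Conf N) (hξ : numParticles ξ = k) (hξ' : numParticles ξ' = k)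
    (hle : heightLE ξ ξ') (hne : ξ ≠ ξ') :
    lam p ^ (((k : ℝ) - N) / 2) * Real.sin (Real.pi / N) ≤
      eigenF N p a 1 ξ' - eigenF N p a 1 ξ := by
  obtain ⟨hk1, hkN⟩ := hk
  obtain ⟨hp1, hp2⟩ := hp
  have hq : (0 : ℝ) < 1 - p := by linarith
  have hL1 : 1 < lam p := by rw [lam, lt_div_iff₀ hq]; linarith
  have hL0 : (0 : ℝ) < lam p := by linarith
  have hd : (0 : ℝ) < lam p - 1 := by linarith
  have hN0 : (0 : ℝ) < (N : ℝ) := by positivity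
  -- existence of a strict point
  have hEx : ∃ x, x ≤ N ∧ height ξ x < height ξ' x := by
    by_contra hcon
    push_neg at hcon
    exact hne (eq_of_height_eq ξ ξ' fun x hx => le_antisymm (hle x hx) (hcon x hx))
  obtain ⟨x₀, hx₀N, hx₀lt⟩ := hEx
  have hx₀0 : x₀ ≠ 0 := by
    rintro rfl
    rw [height_zero, height_zero] at hx₀lt
    exact lt_irrefl _ hx₀lt
  have hx₀Nne : x₀ ≠ N := by
    rintro rfl
    rw [height_N_eq ξ hξ, height_N_eq ξ' hξ'] at hx₀lt
    exact lt_irrefl _ hx₀lt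
  have hmem : x₀ ∈ Finset.Icc 1 (N - 1) := by
    rw [Finset.mem_Icc]; omega
  have hpar : height ξ x₀ + 2 ≤ height ξ' x₀ := by
    have d1 := height_add_even ξ hx₀N
    have d2 := height_add_even ξ' hx₀N
    omega
  have hlow : (k : ℤ) - N ≤ height ξ x₀ := by
    have b1 := neg_le_height ξ hx₀N
    have b2 := height_ge_of_particles ξ hξ hx₀N
    omega
  -- rewrite the difference
  have hdiff : eigenF N p a 1 ξ' - eigenF N p a 1 ξ
      = ∑ x ∈ Finset.Icc 1 (N - 1),
          Real.sin (Real.pi * x / N) *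
            ((lam p ^ ((height ξ' x : ℝ) / 2) - lam p ^ ((height ξ x : ℝ) / 2)) /
              (lam p - 1)) := by
    simp only [eigenF]
    rw [← Finset.sum_sub_distrib]
    refine Finset.sum_congr rfl fun x hx => ?_
    rw [Nat.cast_one, one_mul]
    ring
  rw [hdiff]
  have hterm : ∀ x ∈ Finset.Icc 1 (N - 1),
      0 ≤ Real.sin (Real.pi * x / N) *
        ((lam p ^ ((height ξ' x : ℝ) / 2) - lam p ^ ((height ξ x : ℝ) / 2)) /
          (lam p - 1)) := by
    intro x hx
    rw [Finset.mem_Icc] at hx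
    have hxN : x ≤ N := by omega
    have hxNr : (x : ℝ) ≤ N := by exact_mod_cast hxN
    have hs : 0 ≤ Real.sin (Real.pi * x / N) := by
      apply Real.sin_nonneg_of_nonneg_of_le_pi
      · positivity
      · rw [div_le_iff₀ hN0]
        nlinarith [Real.pi_pos]
    have hmono : lam p ^ ((height ξ x : ℝ) / 2) ≤ lam p ^ ((height ξ' x : ℝ) / 2) := by
      apply Real.rpow_le_rpow_of_exponent_le hL1.le
      have := hle x hxN
      have hr : ((height ξ x : ℤ) : ℝ) ≤ ((height ξ' x : ℤ) : ℝ) := by exact_mod_cast this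
      linarith
    exact mul_nonneg hs (div_nonneg (by linarith) hd.le)
  refine le_trans ?_ (Finset.single_le_sum hterm hmem)
  rw [mul_comm]
  have hsin : Real.sin (Real.pi / N) ≤ Real.sin (Real.pi * x₀ / N) := by
    rw [Finset.mem_Icc] at hmem
    exact sin_pi_div_le hN hmem.1 hmem.2
  have hsin0 : 0 ≤ Real.sin (Real.pi * x₀ / N) := by
    rw [Finset.mem_Icc] at hmem
    have hxNr : (x₀ : ℝ) ≤ N := by exact_mod_cast hx₀N
    apply Real.sin_nonneg_of_nonneg_of_le_pi
    · positivity
    · rw [div_le_iff₀ hN0]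
      nlinarith [Real.pi_pos]
  have hfrac : lam p ^ (((k : ℝ) - N) / 2) ≤
      (lam p ^ ((height ξ' x₀ : ℝ) / 2) - lam p ^ ((height ξ x₀ : ℝ) / 2)) / (lam p - 1) := by
    rw [le_div_iff₀ hd]
    have e1 : lam p ^ (((k : ℝ) - N) / 2) * (lam p - 1)
        ≤ lam p ^ ((height ξ x₀ : ℝ) / 2) * (lam p - 1) := by
      apply mul_le_mul_of_nonneg_right _ hd.le
      apply Real.rpow_le_rpow_of_exponent_le hL1.le
      have hr : ((k : ℝ) - N) ≤ ((height ξ x₀ : ℤ) : ℝ) := by exact_mod_cast hlow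
      linarith
    have e2 : lam p ^ ((height ξ x₀ : ℝ) / 2) * (lam p - 1)
        ≤ lam p ^ ((height ξ' x₀ : ℝ) / 2) - lam p ^ ((height ξ x₀ : ℝ) / 2) := by
      have e3 : lam p ^ ((height ξ x₀ : ℝ) / 2 + 1) ≤ lam p ^ ((height ξ' x₀ : ℝ) / 2) := by
        apply Real.rpow_le_rpow_of_exponent_le hL1.le
        have hr : ((height ξ x₀ : ℤ) : ℝ) + 2 ≤ ((height ξ' x₀ : ℤ) : ℝ) := by
          exact_mod_cast hpar
        linarith
      rw [Real.rpow_add hL0, Real.rpow_one] at e3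
      linarith
    linarith
  exact mul_le_mul hsin hfrac (Real.rpow_nonneg hL0.le _) hsin0

end Wasep
end
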